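/- Let A, C be bounded self-adjoint operators on Hilbert spaces H_A, H_C, B ∈ B(H_C, H_A), X ∈ B(H_A, H_C) a solution of X A - C X + X B X = B*, Z = A + B X, Λ = (I + X*X)^{1/2} Z (I + X*X)^{-1/2}, and γ ∈ ℝ. Then ‖X (Z - γ I)‖ ≤ ‖X‖ · ‖Λ - γ I‖. -/

import Mathlib

set_option maxHeartbeats 1000000

/-- Key inequality in the proof of the tan Θ theorem: if `X` solves the Riccati equation,
`Z = A + BX` and `Λ = (I+X*X)^{1/2} Z (I+X*X)^{-1/2}`, then for every real `γ`,
`‖X (Z - γI)‖ ≤ ‖X‖ ‖Λ - γI‖`. -/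
theorem norm_X_comp_Z_sub_gamma
    {HA HC : Type*} [NormedAddCommGroup HA] [InnerProductSpace ℂ HA] [CompleteSpace HA]
    [NormedAddCommGroup HC] [InnerProductSpace ℂ HC] [CompleteSpace HC]
    (A : HA →L[ℂ] HA) (hA : IsSelfAdjoint A)
    (C : HC →L[ℂ] HC) (hC : IsSelfAdjoint C)
    (B : HC →L[ℂ] HA)
    (X : HA →L[ℂ] HC)
    (hX : X ∘L A - C ∘L X + X ∘L B ∘L X = ContinuousLinearMap.adjoint B)
    (S : HA →L[ℂ] HA) (hSpos : S.IsPositive)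
    (hSsq : S ∘L S = 1 + ContinuousLinearMap.adjoint X ∘L X)
    (Sinv : HA →L[ℂ] HA) (hSinv : S ∘L Sinv = 1) (hSinv' : Sinv ∘L S = 1)
    (Z : HA →L[ℂ] HA) (hZ : Z = A + B ∘L X)
    (Lam : HA →L[ℂ] HA) (hLam : Lam = S ∘L Z ∘L Sinv)
    (γ : ℝ) :
    ‖X ∘L (Z - (γ : ℂ) • 1)‖ ≤ ‖X‖ * ‖Lam - (γ : ℂ) • 1‖ := by
  set k := ‖X‖ with hk
  set c := Real.sqrt (1 + k ^ 2) with hc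
  have hk0 : 0 ≤ k := norm_nonneg X
  have hc2 : c ^ 2 = 1 + k ^ 2 := Real.sq_sqrt (by positivity)
  have hcpos : 0 < c := Real.sqrt_pos.2 (by positivity)
  -- Fact A : ‖S v‖² = ‖v‖² + ‖X v‖²
  have factA : ∀ v : HA, ‖S v‖ ^ 2 = ‖v‖ ^ 2 + ‖X v‖ ^ 2 := by
    intro v
    have h1 : (inner ℂ (S v) (S v) : ℂ) = inner ℂ v ((S ∘L S) v) := by
      conv_rhs => rw [ContinuousLinearMap.comp_apply,
        ← ContinuousLinearMap.adjoint_inner_left, hSpos.isSelfAdjoint.adjoint_eq]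
    rw [hSsq] at h1
    simp only [ContinuousLinearMap.add_apply, ContinuousLinearMap.one_apply,
      ContinuousLinearMap.comp_apply, inner_add_right,
      ContinuousLinearMap.adjoint_inner_right] at h1
    simp only [inner_self_eq_norm_sq_to_K] at h1
    exact_mod_cast h1
  -- Fact C : ‖S u‖ ≤ c * ‖u‖
  have factC : ∀ u : HA, ‖S u‖ ≤ c * ‖u‖ := by
    intro u
    have hx : ‖X u‖ ≤ k * ‖u‖ := X.le_opNorm u
    have hsq : ‖S u‖ ^ 2 ≤ (c * ‖u‖) ^ 2 := by
      rw [factA u, mul_pow, hc2]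
      nlinarith [norm_nonneg (X u), norm_nonneg u]
    calc ‖S u‖ = Real.sqrt (‖S u‖ ^ 2) := (Real.sqrt_sq (norm_nonneg _)).symm
      _ ≤ Real.sqrt ((c * ‖u‖) ^ 2) := Real.sqrt_le_sqrt hsq
      _ = c * ‖u‖ := Real.sqrt_sq (by positivity)
  -- Fact B : ‖X (Sinv w)‖ * c ≤ k * ‖w‖
  have factB : ∀ w : HA, ‖X (Sinv w)‖ * c ≤ k * ‖w‖ := by
    intro w
    set v := Sinv w with hv
    have hw : S v = w := by
      have := congrArg (fun T => T w) hSinv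
      simpa using this
    have hw2 : ‖w‖ ^ 2 = ‖v‖ ^ 2 + ‖X v‖ ^ 2 := by rw [← hw, factA]
    have hx : ‖X v‖ ≤ k * ‖v‖ := X.le_opNorm v
    have hsq : (‖X v‖ * c) ^ 2 ≤ (k * ‖w‖) ^ 2 := by
      rw [mul_pow, mul_pow, hc2, hw2]
      nlinarith [norm_nonneg (X v), norm_nonneg v]
    calc ‖X v‖ * c = Real.sqrt ((‖X v‖ * c) ^ 2) := (Real.sqrt_sq (by positivity)).symm
      _ ≤ Real.sqrt ((k * ‖w‖) ^ 2) := Real.sqrt_le_sqrt hsq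
      _ = k * ‖w‖ := Real.sqrt_sq (by positivity)
  have hinv : ∀ u : HA, Sinv (S u) = u := by
    intro u
    have := congrArg (fun T => T u) hSinv'
    simpa using this
  have hid : ∀ u : HA, (Lam - (γ:ℂ) • 1) (S u) = S ((Z - (γ:ℂ) • 1) u) := by
    intro u
    simp only [hLam, ContinuousLinearMap.sub_apply, ContinuousLinearMap.smul_apply,
      ContinuousLinearMap.one_apply, ContinuousLinearMap.comp_apply, hinv u, map_sub, map_smul]
  set N := ‖Lam - (γ:ℂ) • 1‖ with hN
  have hN0 : 0 ≤ N := norm_nonneg _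
  refine ContinuousLinearMap.opNorm_le_bound _ (by positivity) fun u => ?_
  have key : (X ∘L (Z - (γ:ℂ) • 1)) u = X (Sinv ((Lam - (γ:ℂ) • 1) (S u))) := by
    rw [hid u, hinv, ContinuousLinearMap.comp_apply]
  rw [key]
  have chain : ‖X (Sinv ((Lam - (γ:ℂ) • 1) (S u)))‖ * c ≤ (k * N * ‖u‖) * c := by
    calc ‖X (Sinv ((Lam - (γ:ℂ) • 1) (S u)))‖ * c
        ≤ k * ‖(Lam - (γ:ℂ) • 1) (S u)‖ := factB _
      _ ≤ k * (N * ‖S u‖) :=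
          mul_le_mul_of_nonneg_left ((Lam - (γ:ℂ) • 1).le_opNorm (S u)) hk0
      _ ≤ k * (N * (c * ‖u‖)) :=
          mul_le_mul_of_nonneg_left (mul_le_mul_of_nonneg_left (factC u) hN0) hk0
      _ = (k * N * ‖u‖) * c := by ring
  exact le_of_mul_le_mul_right chain hcpos
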